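/- Let T : E → E be a linear map of a finite-dimensional complex vector space, S ⊆ E a finite spanning set with T(S) ⊆ S. If v ∈ E is an eigenvector of T with eigenvalue λ, then the orbit {Tⁿ(v) : n ≥ 0} = {λⁿ v : n ≥ 0} is a finite set. -/
import Mathlib


theorem orbit_of_eigenvector_finite
    (E : Type*) [AddCommGroup E] [Module ℂ E] [FiniteDimensional ℂ E]
    (T : E →ₗ[ℂ] E) (S : Set E) (hSfin : S.Finite) (hTS : T '' S ⊆ S)
    (hspan : Submodule.span ℂ S = ⊤)
    (v : E) (hv : v ≠ 0) (μ : ℂ) (heig : T v = μ • v) :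
    (Set.range fun n : ℕ => (T ^ n) v) = (Set.range fun n : ℕ => μ ^ n • v) ∧
      (Set.range fun n : ℕ => (T ^ n) v).Finite := by
  -- powers of T preserve S
  have hpow : ∀ n : ℕ, ∀ x ∈ S, (T ^ n) x ∈ S := by
    intro n
    induction n with
    | zero => intro x hx; simpa using hx
    | succ n ih =>
      intro x hx
      have : (T ^ (n + 1)) x = (T ^ n) (T x) := by
        rw [pow_succ]; rfl
      rw [this]
      exact ih _ (hTS ⟨x, hx, rfl⟩)
  -- eigenvector powers
  have heigpow : ∀ n : ℕ, (T ^ n) v = μ ^ n • v := by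
    intro n
    induction n with
    | zero => simp
    | succ n ih =>
      have : (T ^ (n + 1)) v = T ((T ^ n) v) := by
        rw [pow_succ']; rfl
      rw [this, ih, map_smul, heig, smul_smul, pow_succ', mul_comm]
  have hrange : (Set.range fun n : ℕ => (T ^ n) v) = Set.range fun n : ℕ => μ ^ n • v := by
    ext x
    simp only [Set.mem_range, heigpow]
  refine ⟨hrange, ?_⟩
  rw [hrange]
  -- pigeonhole on functions S → S
  have : Finite ↥S := hSfin.to_subtype
  obtain ⟨a, b, hab, hfab⟩ :=
    Finite.exists_ne_map_eq_of_infinite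
      (fun n : ℕ => (fun s : S => (⟨(T ^ n) s.1, hpow n s.1 s.2⟩ : S)))
  have hTab : (T ^ a) = (T ^ b) := by
    apply LinearMap.ext_on hspan
    intro x hx
    have := congrFun hfab ⟨x, hx⟩
    exact Subtype.ext_iff.mp this
  have hμab : μ ^ a = μ ^ b := by
    have h1 : (T ^ a) v = (T ^ b) v := by rw [hTab]
    rw [heigpow, heigpow] at h1
    exact smul_left_injective ℂ hv h1
  -- wlog a < b
  obtain ⟨a, b, hlt, hμab⟩ : ∃ a b : ℕ, a < b ∧ μ ^ a = μ ^ b := by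
    rcases hab.lt_or_gt with h | h
    · exact ⟨a, b, h, hμab⟩
    · exact ⟨b, a, h, hμab.symm⟩
  by_cases hμ : μ = 0
  · apply Set.Finite.subset ((Set.finite_singleton (0:E)).insert v)
    rintro x ⟨n, rfl⟩
    rcases Nat.eq_zero_or_pos n with rfl | hn
    · simp
    · exact Or.inr (by simp [hμ, zero_pow hn.ne'])
  · have hper : μ ^ (b - a) = 1 := by
      have : μ ^ a * μ ^ (b - a) = μ ^ a * 1 := by
        rw [mul_one, ← pow_add, Nat.add_sub_cancel' hlt.le, hμab]
      exact mul_left_cancel₀ (pow_ne_zero a hμ) this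
    set d := b - a with hd
    have hdpos : 0 < d := Nat.sub_pos_of_lt hlt
    apply Set.Finite.subset (Set.finite_range fun m : Fin d => μ ^ (m : ℕ) • v)
    rintro x ⟨n, rfl⟩
    refine ⟨⟨n % d, Nat.mod_lt n hdpos⟩, ?_⟩
    have : μ ^ n = μ ^ (n % d) := by
      conv_rhs => rw [← one_mul (μ ^ (n % d))]
      rw [← one_pow (n / d), ← hper, ← pow_mul, ← pow_add,
        Nat.div_add_mod]
    simp [this]
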